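/- arXiv:1907.06140 — 3 statements merged into one kernel-verified Lean document; each statement's English description precedes it below -/
import Mathlib

section
/- Let Ω ⊆ ℝⁿ and x̄ ∈ Ω. Then v ∈ N̂(x̄;Ω) if and only if there exists a function ψ : ℝⁿ → ℝ that is Fréchet differentiable at x̄ with ∇ψ(x̄) = v and achieves at x̄ its local maximum relative to Ω (i.e., there is a neighborhood U of x̄ with ψ(x) ≤ ψ(x̄) for all x ∈ Ω ∩ U). -/
open Filter Topology RealInnerProductSpace

noncomputable section

/-- Inner pairing on a product space (sum of the componentwise pairings). -/
instance prodInnerAux {E F : Type*} [Inner ℝ E] [Inner ℝ F] : Inner ℝ (E × F) :=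
  ⟨fun p q => inner ℝ p.1 q.1 + inner ℝ p.2 q.2⟩

variable {E Y : Type*}

/-- The prenormal (Fréchet/regular) cone `N̂(x; Ω)`:
`v ∈ N̂(x;Ω)` iff `limsup_{u →_Ω x} ⟨v, u - x⟩ / ‖u - x‖ ≤ 0`. -/
def preNC [NormedAddCommGroup E] [Inner ℝ E] (Ω : Set E) (x : E) : Set E :=
  {v | ∀ ε : ℝ, 0 < ε → ∃ δ : ℝ, 0 < δ ∧
      ∀ u ∈ Ω, ‖u - x‖ < δ → ⟪v, u - x⟫ ≤ ε * ‖u - x‖}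

/-- The basic/limiting (Mordukhovich) normal cone `N(x̄; Ω)`, obtained as the
sequential outer limit of prenormal cones at points of `Ω` converging to `x̄`. -/
def limNC [NormedAddCommGroup E] [Inner ℝ E] (Ω : Set E) (x : E) : Set E :=
  {v | ∃ xs vs : ℕ → E, (∀ k, xs k ∈ Ω) ∧ (∀ k, vs k ∈ preNC Ω (xs k)) ∧
      Tendsto xs atTop (𝓝 x) ∧ Tendsto vs atTop (𝓝 v)}

/-- Epigraph of an extended-real-valued function. -/
def epiF (φ : E → EReal) : Set (E × ℝ) := {p | φ p.1 ≤ (p.2 : EReal)}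

/-- The basic (limiting, Mordukhovich) subdifferential `∂φ(x)`. -/
def basicSubdiff [NormedAddCommGroup E] [Inner ℝ E] (φ : E → EReal) (x : E) : Set E :=
  {v | ((v, (-1 : ℝ)) : E × ℝ) ∈ limNC (epiF φ) (x, (φ x).toReal)}

/-- The singular subdifferential `∂^∞φ(x)`. -/
def singSubdiff [NormedAddCommGroup E] [Inner ℝ E] (φ : E → EReal) (x : E) : Set E :=
  {v | ((v, (0 : ℝ)) : E × ℝ) ∈ limNC (epiF φ) (x, (φ x).toReal)}

/-- Basic subdifferential of a real-valued function. -/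
def basicSubdiffR [NormedAddCommGroup E] [Inner ℝ E] (φ : E → ℝ) (x : E) : Set E :=
  basicSubdiff (fun u => ((φ u : ℝ) : EReal)) x

/-- The regular (Fréchet) subdifferential `∂̂φ(x)`:
`v ∈ ∂̂φ(x)` iff `liminf_{u → x} (φ(u) - φ(x) - ⟨v, u - x⟩)/‖u - x‖ ≥ 0`. -/
def regSubdiff [NormedAddCommGroup E] [Inner ℝ E] (φ : E → EReal) (x : E) : Set E :=
  {v | ∀ ε : ℝ, 0 < ε → ∃ δ : ℝ, 0 < δ ∧ ∀ u : E, ‖u - x‖ < δ →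
      ((((φ x).toReal + ⟪v, u - x⟫ - ε * ‖u - x‖ : ℝ)) : EReal) ≤ φ u}

/-- Regular subdifferential of a real-valued function. -/
def regSubdiffR [NormedAddCommGroup E] [Inner ℝ E] (φ : E → ℝ) (x : E) : Set E :=
  regSubdiff (fun u => ((φ u : ℝ) : EReal)) x

/-- Graph of a set-valued mapping. -/
def gphF (F : E → Set Y) : Set (E × Y) := {p | p.2 ∈ F p.1}

/-- The coderivative `D*F(x̄,ȳ)(w) = {v : (v, -w) ∈ N((x̄,ȳ); gph F)}`. -/
def coderiv [NormedAddCommGroup E] [Inner ℝ E] [NormedAddCommGroup Y] [Inner ℝ Y]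
    (F : E → Set Y) (x : E) (y : Y) (w : Y) : Set E :=
  {v | ((v, -w) : E × Y) ∈ limNC (gphF F) (x, y)}

/-- A set is locally closed around a point. -/
def LocallyClosedAt [TopologicalSpace E] (Ω : Set E) (x : E) : Prop :=
  ∃ U ∈ 𝓝 x, IsClosed (Ω ∩ U)

/-- A real-valued function is Lipschitz continuous around a point. -/
def LipschitzAround [NormedAddCommGroup E] (φ : E → ℝ) (x : E) : Prop :=
  ∃ (L : ℝ) (U : Set E), U ∈ 𝓝 x ∧ ∀ u ∈ U, ∀ w ∈ U, |φ u - φ w| ≤ L * ‖u - w‖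

/-- An extended-real-valued function is lower semicontinuous around a point. -/
def LscAround [TopologicalSpace E] (φ : E → EReal) (x : E) : Prop :=
  ∃ U ∈ 𝓝 x, LowerSemicontinuousOn φ U

/-- Inner semicontinuity of a set-valued mapping at a point of its graph. -/
def InnerSemicontAt [TopologicalSpace E] [TopologicalSpace Y]
    (M : E → Set Y) (x : E) (y : Y) : Prop :=
  ∀ xs : ℕ → E, Tendsto xs atTop (𝓝 x) → (∀ k, (M (xs k)).Nonempty) →
    ∃ ys : ℕ → Y, (∀ k, ys k ∈ M (xs k)) ∧ Tendsto ys atTop (𝓝 y)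

/-- The Lipschitz-like (Aubin) property of a set-valued mapping around a graph point. -/
def LipschitzLike [NormedAddCommGroup E] [NormedAddCommGroup Y]
    (F : E → Set Y) (x : E) (y : Y) : Prop :=
  ∃ (U : Set E) (V : Set Y) (ℓ : ℝ), U ∈ 𝓝 x ∧ V ∈ 𝓝 y ∧ 0 ≤ ℓ ∧
    ∀ a ∈ U, ∀ b ∈ U, ∀ z ∈ F a ∩ V, ∃ z' ∈ F b, ‖z - z'‖ ≤ ℓ * ‖a - b‖

/-- The optimal value (marginal) function `ϑ(x) = inf{φ(x,y) : y ∈ F(x)}`. -/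
def valueFn (φ : E × Y → ℝ) (F : E → Set Y) (x : E) : EReal :=
  sInf ((fun y => ((φ (x, y) : ℝ) : EReal)) '' F x)

/-- The argminimum mapping `M(x) = {y ∈ F(x) : φ(x,y) = ϑ(x)}`. -/
def argminMap (φ : E × Y → ℝ) (F : E → Set Y) (x : E) : Set Y :=
  {y | y ∈ F x ∧ ((φ (x, y) : ℝ) : EReal) = valueFn φ F x}


/-- Local extremality of a system of sets `{Ω i}` at a common point `x`:
there are a neighborhood `U` of `x` and sequences `a i k → 0` such that
`⋂ i (Ω i - a i k) ∩ U = ∅` for all `k`. -/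
def LocallyExtremalAt [NormedAddCommGroup E] {s : ℕ} (Ω : Fin s → Set E) (x : E) : Prop :=
  ∃ U ∈ 𝓝 x, ∃ a : Fin s → ℕ → E,
    (∀ i, Tendsto (a i) atTop (𝓝 0)) ∧
    ∀ k : ℕ, (⋂ i, (fun z => z + a i k) ⁻¹' Ω i) ∩ U = ∅

open scoped Classical in
/-- Extended-real-valued indicator function of a set (0 on the set, +∞ off it). -/
def indicatorE (Ω : Set E) (p : E) : EReal := if p ∈ Ω then 0 else ⊤

/-- Lower-level constraint mapping `F(x) = {y : fᵢ(x,y) ≤ 0, i = 1,…,r}`. -/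
def lowerF {r : ℕ} (f : Fin r → E × Y → ℝ) (x : E) : Set Y := {y | ∀ i, f i (x, y) ≤ 0}

/-- Feasibility in the single-level reformulation (P) of the optimistic bilevel program:
`gⱼ(x) ≤ 0`, `fᵢ(x,y) ≤ 0`, and `φ(x,y) ≤ ϑ(x)`. -/
def FeasibleP {r s : ℕ} (φ : E × Y → ℝ) (f : Fin r → E × Y → ℝ) (g : Fin s → E → ℝ)
    (x : E) (y : Y) : Prop :=
  (∀ j, g j x ≤ 0) ∧ (∀ i, f i (x, y) ≤ 0) ∧
    ((φ (x, y) : ℝ) : EReal) ≤ valueFn φ (lowerF f) x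

/-- `(x̄,ȳ)` is a local optimal solution to the single-level reformulation (P). -/
def LocalOptP [NormedAddCommGroup E] [NormedAddCommGroup Y] {r s : ℕ}
    (φ ψ : E × Y → ℝ) (f : Fin r → E × Y → ℝ) (g : Fin s → E → ℝ)
    (x : E) (y : Y) : Prop :=
  FeasibleP φ f g x y ∧
    ∃ U ∈ 𝓝 ((x, y) : E × Y), ∀ p ∈ U, FeasibleP φ f g p.1 p.2 → ψ (x, y) ≤ ψ p

/-- Partial calmness of (P) at a feasible point `(x̄,ȳ)` with constant `κ > 0`:
there is a neighborhood `U` of `(x̄,ȳ,0)` such that `ψ(x,y) - ψ(x̄,ȳ) + κ|ν| ≥ 0`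
for all `(x,y,ν) ∈ U` feasible to the perturbed problem. -/
def PartiallyCalm [NormedAddCommGroup E] [NormedAddCommGroup Y] {r s : ℕ}
    (φ ψ : E × Y → ℝ) (f : Fin r → E × Y → ℝ) (g : Fin s → E → ℝ)
    (x : E) (y : Y) (κ : ℝ) : Prop :=
  ∃ U ∈ 𝓝 ((x, y, (0 : ℝ)) : E × Y × ℝ), ∀ a ∈ U,
    (∀ j, g j a.1 ≤ 0) → (∀ i, f i (a.1, a.2.1) ≤ 0) →
    (((φ (a.1, a.2.1) + a.2.2 : ℝ) : EReal) = valueFn φ (lowerF f) a.1) →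
    ψ (x, y) ≤ ψ (a.1, a.2.1) + κ * |a.2.2|

/-- `(x̄,ȳ)` is a local optimal solution to the penalized problem:
minimize `ψ(x,y) + κ(φ(x,y) - ϑ(x))` subject to `gⱼ(x) ≤ 0`, `fᵢ(x,y) ≤ 0`. -/
def LocalOptPen [NormedAddCommGroup E] [NormedAddCommGroup Y] {r s : ℕ}
    (φ ψ : E × Y → ℝ) (f : Fin r → E × Y → ℝ) (g : Fin s → E → ℝ)
    (x : E) (y : Y) (κ : ℝ) : Prop :=
  ∃ U ∈ 𝓝 ((x, y) : E × Y), ∀ p ∈ U, (∀ j, g j p.1 ≤ 0) → (∀ i, f i p ≤ 0) →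
    ((ψ (x, y) : ℝ) : EReal) + (κ : EReal) * (((φ (x, y) : ℝ) : EReal) - valueFn φ (lowerF f) x)
      ≤ ((ψ p : ℝ) : EReal) + (κ : EReal) * (((φ p : ℝ) : EReal) - valueFn φ (lowerF f) p.1)

/-- Lower-level regularity (generalized MFCQ for the lower-level constraints) at `(x̄,ȳ)`. -/
def LowerLevelRegular [NormedAddCommGroup E] [Inner ℝ E]
    [NormedAddCommGroup Y] [NormedSpace ℝ Y] [Inner ℝ Y]
    {r : ℕ} (f : Fin r → E × Y → ℝ) (x : E) (y : Y) : Prop :=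
  ∀ (w : Fin r → E × Y) (l : Fin r → ℝ),
    (∀ i, f i (x, y) = 0 → w i ∈ basicSubdiffR (f i) (x, y)) →
    (∀ i, 0 ≤ l i) → (∀ i, f i (x, y) ≠ 0 → l i = 0) →
    ∑ i, l i • (w i).2 = 0 → ∀ i, l i = 0

/-- Upper-level regularity (generalized MFCQ for the upper-level constraints) at `x̄`. -/
def UpperLevelRegular [NormedAddCommGroup E] [NormedSpace ℝ E] [Inner ℝ E]
    {s : ℕ} (g : Fin s → E → ℝ) (x : E) : Prop :=
  ∀ (w : Fin s → E) (l : Fin s → ℝ),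
    (∀ j, g j x = 0 → w j ∈ basicSubdiffR (g j) x) →
    (∀ j, 0 ≤ l j) → (∀ j, g j x ≠ 0 → l j = 0) →
    ∑ j, l j • w j = 0 → ∀ j, l j = 0


/-- Smooth variational description of prenormal vectors. -/
theorem prenormal_smooth_description {n : ℕ}
    (Ω : Set (EuclideanSpace ℝ (Fin n))) (xbar : EuclideanSpace ℝ (Fin n)) (hx : xbar ∈ Ω) (v : EuclideanSpace ℝ (Fin n)) :
    v ∈ preNC Ω xbar ↔
      ∃ ψ : EuclideanSpace ℝ (Fin n) → ℝ, HasFDerivAt ψ (innerSL ℝ v) xbar ∧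
        ∃ U ∈ 𝓝 xbar, ∀ u ∈ Ω ∩ U, ψ u ≤ ψ xbar := by
  constructor
  · -- forward direction
    intro hv
    obtain ⟨δ₁, hδ₁pos, hδ₁⟩ := hv 1 one_pos
    set S : ℝ → Set ℝ := fun t =>
      insert (0:ℝ) ((fun u => ⟪v, u - xbar⟫) ''
        {u | u ∈ Ω ∧ ‖u - xbar‖ ≤ min t (δ₁/2)}) with hS
    have hbdd : ∀ t, BddAbove (S t) := by
      intro t
      refine ⟨δ₁/2, ?_⟩
      rintro y (rfl | ⟨u, ⟨huΩ, hun⟩, rfl⟩)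
      · positivity
      · have h1 : ‖u - xbar‖ < δ₁ := lt_of_le_of_lt (hun.trans (min_le_right _ _)) (by linarith)
        have := hδ₁ u huΩ h1
        simpa using this.trans (by simpa using hun.trans (min_le_right _ _))
    set τ : ℝ → ℝ := fun t => sSup (S t) with hτ
    have hτ0 : ∀ t, 0 ≤ τ t := fun t => le_csSup (hbdd t) (Set.mem_insert _ _)
    have hτsmall : ∀ ε : ℝ, 0 < ε → ∃ δ : ℝ, 0 < δ ∧ ∀ t : ℝ, 0 ≤ t → t < δ → τ t ≤ ε * t := by
      intro ε hε
      obtain ⟨δ, hδpos, hδ⟩ := hv ε hε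
      refine ⟨δ, hδpos, fun t ht htδ => ?_⟩
      refine Real.sSup_le ?_ (by positivity)
      rintro y (rfl | ⟨u, ⟨huΩ, hun⟩, rfl⟩)
      · positivity
      · have h1 : ‖u - xbar‖ < δ := lt_of_le_of_lt (hun.trans (min_le_left _ _)) htδ
        have := hδ u huΩ h1
        calc ⟪v, u - xbar⟫ ≤ ε * ‖u - xbar‖ := this
          _ ≤ ε * t := by
              have := hun.trans (min_le_left _ _)
              nlinarith
    have hτzero : τ 0 = 0 := by
      obtain ⟨δ, hδpos, h⟩ := hτsmall 1 one_pos
      have := h 0 le_rfl hδpos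
      linarith [hτ0 0]
    set ψ : EuclideanSpace ℝ (Fin n) → ℝ := fun u => ⟪v, u - xbar⟫ - τ ‖u - xbar‖ with hψ
    have hψx : ψ xbar = 0 := by simp [hψ, hτzero]
    refine ⟨ψ, ?_, Metric.ball xbar (δ₁/2), Metric.ball_mem_nhds _ (by positivity), ?_⟩
    · rw [hasFDerivAt_iff_isLittleO_nhds_zero]
      rw [Asymptotics.isLittleO_iff]
      intro c hc
      obtain ⟨δ, hδpos, h⟩ := hτsmall c hc
      rw [Metric.eventually_nhds_iff]
      refine ⟨δ, hδpos, fun u hu => ?_⟩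
      have hd : ‖u‖ < δ := by rwa [← dist_zero_right]
      have h1 : τ ‖u‖ ≤ c * ‖u‖ := h _ (norm_nonneg _) hd
      have h2 : ψ (xbar + u) - ψ xbar - (innerSL ℝ v) u = -(τ ‖u‖) := by
        simp only [hψ, innerSL_apply_apply, add_sub_cancel_left, sub_self,
          inner_zero_right, norm_zero, hτzero]
        ring
      rw [h2]
      rw [Real.norm_eq_abs, abs_neg, abs_of_nonneg (hτ0 _)]
      exact h1
    · rintro u ⟨huΩ, huB⟩
      rw [hψx, hψ]
      have hmem : ⟪v, u - xbar⟫ ∈ S ‖u - xbar‖ := by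
        refine Set.mem_insert_of_mem _ ⟨u, ⟨huΩ, le_min le_rfl ?_⟩, rfl⟩
        rw [Metric.mem_ball, dist_eq_norm] at huB
        linarith
      have := le_csSup (hbdd _) hmem
      simpa using this
  · -- backward direction
    rintro ⟨ψ, hF, U, hU, hmax⟩
    intro ε hε
    have hlo := hF.isLittleO
    rw [Asymptotics.isLittleO_iff] at hlo
    have hev := (hlo hε).and (hU : ∀ᶠ u in 𝓝 xbar, u ∈ U)
    rw [Metric.eventually_nhds_iff] at hev
    obtain ⟨δ, hδpos, hδ⟩ := hev
    refine ⟨δ, hδpos, fun u huΩ hun => ?_⟩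
    have hd : dist u xbar < δ := by rwa [dist_eq_norm]
    obtain ⟨h1, h2⟩ := hδ hd
    have h3 : ψ u ≤ ψ xbar := hmax u ⟨huΩ, h2⟩
    have h4 : |ψ u - ψ xbar - ⟪v, u - xbar⟫| ≤ ε * ‖u - xbar‖ := by
      simpa [Real.norm_eq_abs] using h1
    have := abs_le.mp h4
    linarith [this.1, this.2]

end
end

section
/- Let φ₁ : ℝⁿ → ℝ∪{+∞} and φ₂ : ℝⁿ → ℝ be finite at x̄ and assume that ∂̂φ₂(x̄) ≠ ∅. Then the difference rule for regular subgradients holds: ∂̂(φ₁ − φ₂)(x̄) ⊆ ⋂_{v ∈ ∂̂φ₂(x̄)} [∂̂φ₁(x̄) − v] ⊆ ∂̂φ₁(x̄) − ∂̂φ₂(x̄). -/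
open Filter Topology RealInnerProductSpace

noncomputable section

variable {E Y : Type*}

/-- Difference rule for regular subgradients:
`∂̂(φ₁ - φ₂)(x̄) ⊆ ⋂_{v ∈ ∂̂φ₂(x̄)} [∂̂φ₁(x̄) - v] ⊆ ∂̂φ₁(x̄) - ∂̂φ₂(x̄)`. -/
theorem regular_subdiff_difference_rule {n : ℕ}
    (φ₁ : EuclideanSpace ℝ (Fin n) → EReal) (φ₂ : EuclideanSpace ℝ (Fin n) → ℝ) (xbar : EuclideanSpace ℝ (Fin n))
    (htop : φ₁ xbar ≠ ⊤) (hbot : φ₁ xbar ≠ ⊥)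
    (hne : (regSubdiffR φ₂ xbar).Nonempty) :
    (∀ w ∈ regSubdiff (fun u => φ₁ u - ((φ₂ u : ℝ) : EReal)) xbar,
        ∀ v ∈ regSubdiffR φ₂ xbar, w + v ∈ regSubdiff φ₁ xbar) ∧
    (∀ w : EuclideanSpace ℝ (Fin n),
        (∀ v ∈ regSubdiffR φ₂ xbar, w + v ∈ regSubdiff φ₁ xbar) →
        ∃ a ∈ regSubdiff φ₁ xbar, ∃ b ∈ regSubdiffR φ₂ xbar, w = a - b) := by
  constructor
  · intro w hw v hv ε hε
    obtain ⟨δ₁, hδ₁, h1⟩ := hw (ε / 2) (by linarith)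
    obtain ⟨δ₂, hδ₂, h2⟩ := hv (ε / 2) (by linarith)
    refine ⟨min δ₁ δ₂, lt_min hδ₁ hδ₂, fun u hu => ?_⟩
    have h1u := h1 u (lt_of_lt_of_le hu (min_le_left _ _))
    have h2u := h2 u (lt_of_lt_of_le hu (min_le_right _ _))
    -- simplify toReal of the difference
    have hdiff : (φ₁ xbar - ((φ₂ xbar : ℝ) : EReal)).toReal
        = (φ₁ xbar).toReal - φ₂ xbar := by
      rw [EReal.toReal_sub htop hbot (by simp) (by simp), EReal.toReal_coe]
    rw [hdiff] at h1u
    -- from h1u : c1 ≤ φ₁ u - φ₂ u, get c1 + φ₂ u ≤ φ₁ u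
    have h1u' : (((φ₁ xbar).toReal - φ₂ xbar + ⟪w, u - xbar⟫ - ε / 2 * ‖u - xbar‖
        + φ₂ u : ℝ) : EReal) ≤ φ₁ u := by
      rw [EReal.coe_add]
      exact (EReal.le_sub_iff_add_le (Or.inl (by simp)) (Or.inl (by simp))).mp h1u
    -- from h2u : φ₂ xbar + ⟪v,u-xbar⟫ - ε/2‖u-xbar‖ ≤ φ₂ u (as EReal of reals)
    have h2r : (φ₂ xbar : ℝ) + ⟪v, u - xbar⟫ - ε / 2 * ‖u - xbar‖ ≤ φ₂ u := by
      have := h2u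
      simp only [regSubdiffR, EReal.toReal_coe] at this ⊢
      exact_mod_cast this
    refine le_trans ?_ h1u'
    rw [EReal.coe_le_coe_iff]
    have hip : ⟪w + v, u - xbar⟫ = ⟪w, u - xbar⟫ + ⟪v, u - xbar⟫ :=
      inner_add_left _ _ _
    rw [hip]
    linarith
  · intro w hw
    obtain ⟨v, hv⟩ := hne
    exact ⟨w + v, hw v hv, v, hv, by abel⟩

end
end

section
/- Let φ₁ : ℝⁿ → ℝ∪{+∞} and φ₂ : ℝⁿ → ℝ be finite at x̄, and let x̄ be a local minimizer of the difference function φ₁ − φ₂. Then the necessary optimality condition ∂̂φ₂(x̄) ⊆ ∂̂φ₁(x̄) holds. -/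
open Filter Topology RealInnerProductSpace

noncomputable section

variable {E Y : Type*}

/-- Necessary condition for a local minimizer of a difference of functions:
`∂̂φ₂(x̄) ⊆ ∂̂φ₁(x̄)`. -/
theorem difference_local_min_condition {n : ℕ}
    (φ₁ : EuclideanSpace ℝ (Fin n) → EReal) (φ₂ : EuclideanSpace ℝ (Fin n) → ℝ) (xbar : EuclideanSpace ℝ (Fin n))
    (htop : φ₁ xbar ≠ ⊤) (hbot : φ₁ xbar ≠ ⊥)
    (hmin : ∃ U ∈ 𝓝 xbar, ∀ u ∈ U,
      φ₁ xbar - ((φ₂ xbar : ℝ) : EReal) ≤ φ₁ u - ((φ₂ u : ℝ) : EReal)) :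
    regSubdiffR φ₂ xbar ⊆ regSubdiff φ₁ xbar := by
  intro v hv ε hε
  obtain ⟨U, hU, hUmin⟩ := hmin
  obtain ⟨δ₀, hδ₀, hball⟩ := Metric.mem_nhds_iff.1 hU
  obtain ⟨δ₁, hδ₁, h2⟩ := hv ε hε
  refine ⟨min δ₀ δ₁, lt_min hδ₀ hδ₁, fun u hu => ?_⟩
  have huU : u ∈ U := hball (by
    simpa [Metric.mem_ball, dist_eq_norm] using lt_of_lt_of_le hu (min_le_left _ _))
  have h2u := h2 u (lt_of_lt_of_le hu (min_le_right _ _))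
  have hm := hUmin u huU
  set r := (φ₁ xbar).toReal with hr
  have hφ1 : φ₁ xbar = (r : EReal) := (EReal.coe_toReal htop hbot).symm
  rw [hφ1] at hm
  have h2u' : φ₂ xbar + ⟪v, u - xbar⟫ - ε * ‖u - xbar‖ ≤ φ₂ u := by
    have := h2u
    simp only [EReal.toReal_coe] at this
    exact_mod_cast this
  by_cases ht : φ₁ u = ⊤
  · rw [ht]; exact le_top
  by_cases hb : φ₁ u = ⊥
  · exfalso
    rw [hb, EReal.bot_sub] at hm
    rw [le_bot_iff, ← EReal.coe_sub] at hm
    exact EReal.coe_ne_bot _ hm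
  have hφu : φ₁ u = (((φ₁ u).toReal : ℝ) : EReal) := (EReal.coe_toReal ht hb).symm
  set s := (φ₁ u).toReal with hs
  rw [hφu] at hm ⊢
  have hm' : r - φ₂ xbar ≤ s - φ₂ u := by exact_mod_cast hm
  have : r + ⟪v, u - xbar⟫ - ε * ‖u - xbar‖ ≤ s := by linarith
  exact_mod_cast this

end
end
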